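/- Let B be a balanced configuration of seven nonzero vectors in ℝ² such that exactly five of the vectors lie on one line L through the origin and the remaining two vectors are linearly independent. Then, after a GL(2,ℝ) change of coordinates and reordering, B = {e₁, e₂ , -e₁-e₂, λe₁, -λe₁, μe₁, -μe₁} for some nonzero reals λ, μ. -/

import Mathlib

noncomputable def det2 (u v : ℝ × ℝ) : ℝ := u.1 * v.2 - u.2 * v.1

def symmZero (S : Multiset ℝ) : Prop := S.map (fun x => -x) = S

noncomputable def dets {n : ℕ} (b : Fin n → ℝ × ℝ) (j : Fin n) : Multiset ℝ :=
  (Finset.univ.filter (fun i => det2 (b i) (b j) ≠ 0)).val.map (fun i => det2 (b i) (b j))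

lemma det2_smul_left (t : ℝ) (u v : ℝ × ℝ) : det2 (t • u) v = t * det2 u v := by
  simp [det2]; ring

lemma det2_smul_right (t : ℝ) (u v : ℝ × ℝ) : det2 u (t • v) = t * det2 u v := by
  simp [det2]; ring

lemma det2_add_left (u w z : ℝ × ℝ) : det2 (u + w) z = det2 u z + det2 w z := by
  simp [det2]; ring

lemma det2_self (u : ℝ × ℝ) : det2 u u = 0 := by simp [det2]; ring

lemma det2_swap (u v : ℝ × ℝ) : det2 u v = - det2 v u := by simp [det2]; ring

lemma collinear_of_det2 {u v : ℝ × ℝ} (hu : u ≠ 0) (hv : v ≠ 0) (h : det2 u v = 0) :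
    ∃ t : ℝ, t ≠ 0 ∧ u = t • v := by
  simp only [det2] at h
  by_cases h1 : v.1 = 0
  · have h2 : v.2 ≠ 0 := by
      intro h2; exact hv (Prod.ext h1 h2)
    refine ⟨u.2 / v.2, ?_, ?_⟩
    · intro ht
      have hu2 : u.2 = 0 := by field_simp at ht; simpa using ht
      have hu1 : u.1 = 0 := by
        have := h; rw [h1, hu2] at this; simpa [h2] using this
      exact hu (Prod.ext hu1 hu2)
    · apply Prod.ext
      · simp only [Prod.smul_fst, smul_eq_mul]
        rw [h1, mul_zero]
        rw [h1, mul_zero, sub_zero] at h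
        exact (mul_eq_zero.1 h).resolve_right h2
      · simp only [Prod.smul_snd, smul_eq_mul]; field_simp
  · refine ⟨u.1 / v.1, ?_, ?_⟩
    · intro ht
      have hu1 : u.1 = 0 := by field_simp at ht; simpa using ht
      have hu2 : u.2 = 0 := by
        rw [hu1] at h
        have : u.2 * v.1 = 0 := by linarith
        rcases mul_eq_zero.1 this with h' | h'
        · exact h'
        · exact absurd h' h1
      exact hu (Prod.ext hu1 hu2)
    · apply Prod.ext
      · simp only [Prod.smul_fst, smul_eq_mul]; field_simp
      · simp only [Prod.smul_snd, smul_eq_mul]; field_simp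
        nlinarith [h]

lemma decomp (p v u : ℝ × ℝ) (h : det2 p v ≠ 0) :
    u = (det2 u v / det2 p v) • p + (det2 p u / det2 p v) • v := by
  simp only [det2] at *
  have h' : v.2 * p.1 - v.1 * p.2 ≠ 0 := by intro e; apply h; linarith
  apply Prod.ext <;>
  · simp only [Prod.fst_add, Prod.snd_add, Prod.smul_fst, Prod.smul_snd, smul_eq_mul]
    field_simp
    ring

lemma symmZero.neg_mem {S : Multiset ℝ} (h : symmZero S) {a : ℝ} (ha : a ∈ S) : -a ∈ S := by
  rw [← h]; exact Multiset.mem_map.2 ⟨a, ha, rfl⟩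

lemma symmZero.erase2 {S : Multiset ℝ} (h : symmZero S) (a : ℝ) :
    symmZero ((S.erase a).erase (-a)) := by
  unfold symmZero at *
  rw [Multiset.map_erase _ neg_injective, Multiset.map_erase _ neg_injective, h, neg_neg,
    Multiset.erase_comm]

lemma mkL (A B C D : ℝ) : ∃ f : (ℝ×ℝ) →ₗ[ℝ] (ℝ×ℝ),
    ∀ z : ℝ × ℝ, f z = (A*z.1 + B*z.2, C*z.1 + D*z.2) := by
  refine ⟨{ toFun := fun z => (A*z.1+B*z.2, C*z.1+D*z.2), map_add' := ?_, map_smul' := ?_ },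
    fun z => rfl⟩
  · intros x y; apply Prod.ext <;> simp <;> ring
  · intros r x; apply Prod.ext <;> simp <;> ring


set_option maxHeartbeats 3200000 in
/-- A balanced configuration of seven nonzero plane vectors with exactly five on a line
through the origin and the other two linearly independent is GL(2,ℝ)-equivalent (with
reordering and nonzero rescaling) to {e₁, e₂, -e₁-e₂, λe₁, -λe₁, μe₁, -μe₁}. -/
theorem stmt12 (b : Fin 7 → ℝ × ℝ) (hnz : ∀ i, b i ≠ 0)
    (hbal : ∀ j, symmZero (dets b j))
    (v : ℝ × ℝ) (hv : v ≠ 0)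
    (hfive : (Finset.univ.filter (fun i => det2 (b i) v = 0)).card = 5)
    (hindep : ∀ i j : Fin 7, det2 (b i) v ≠ 0 → det2 (b j) v ≠ 0 → i ≠ j →
      det2 (b i) (b j) ≠ 0) :
    ∃ g : (ℝ × ℝ) ≃ₗ[ℝ] (ℝ × ℝ), ∃ σ : Equiv.Perm (Fin 7), ∃ s : Fin 7 → ℝ,
      ∃ l m : ℝ, l ≠ 0 ∧ m ≠ 0 ∧ (∀ k, s k ≠ 0) ∧
      ∀ k, g (b k) =
        s k • (![((1:ℝ),(0:ℝ)), (0,1), (-1,-1), (l,0), (-l,0), (m,0), (-m,0)] : Fin 7 → ℝ × ℝ) (σ k) := by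
  classical
  set S := Finset.univ.filter (fun i => det2 (b i) v = 0) with hSdef
  -- two off-line indices
  have hCcard : (Finset.univ.filter (fun i => ¬ det2 (b i) v = 0)).card = 2 := by
    have h7 := Finset.card_filter_add_card_filter_not
      (s := (Finset.univ : Finset (Fin 7))) (p := fun i => det2 (b i) v = 0)
    simp only [Finset.card_univ, Fintype.card_fin] at h7
    rw [← hSdef] at h7
    omega
  obtain ⟨p₀, q₀, hpq, hCval⟩ := Finset.card_eq_two.1 hCcard
  have hp : det2 (b p₀) v ≠ 0 := by
    have : p₀ ∈ Finset.univ.filter (fun i => ¬ det2 (b i) v = 0) := by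
      rw [hCval]; simp
    simpa using (Finset.mem_filter.1 this).2
  have hq : det2 (b q₀) v ≠ 0 := by
    have : q₀ ∈ Finset.univ.filter (fun i => ¬ det2 (b i) v = 0) := by
      rw [hCval]; simp
    simpa using (Finset.mem_filter.1 this).2
  have htri : ∀ i : Fin 7, i ∈ S ∨ i = p₀ ∨ i = q₀ := by
    intro i
    by_cases h : det2 (b i) v = 0
    · left; simp [hSdef, h]
    · right
      have : i ∈ Finset.univ.filter (fun i => ¬ det2 (b i) v = 0) := by simp [h]
      rw [hCval] at this; simpa using this
  have hpS : p₀ ∉ S := by simp [hSdef]; exact hp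
  have hqS : q₀ ∉ S := by simp [hSdef]; exact hq
  have hmemS : ∀ i ∈ S, det2 (b i) v = 0 := by
    intro i hi; exact (Finset.mem_filter.1 hi).2
  -- coefficients of the on-line vectors
  have htex : ∀ i : Fin 7, ∃ t : ℝ, i ∈ S → (t ≠ 0 ∧ b i = t • v) := by
    intro i
    by_cases hi : i ∈ S
    · obtain ⟨t, ht, htv⟩ := collinear_of_det2 (hnz i) hv (hmemS i hi)
      exact ⟨t, fun _ => ⟨ht, htv⟩⟩
    · exact ⟨0, fun h => absurd h hi⟩
  choose t ht using htex
  have ht0 : ∀ i ∈ S, t i ≠ 0 := fun i hi => (ht i hi).1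
  have htv : ∀ i ∈ S, b i = t i • v := fun i hi => (ht i hi).2
  have hScard : S.card = 5 := hfive
  -- balance at an on-line vector: det2 q v = - det2 p v
  have hqpv : det2 (b q₀) v = - det2 (b p₀) v := by
    have hSne : S.Nonempty := by rw [← Finset.card_pos, hScard]; norm_num
    obtain ⟨j₀, hj₀⟩ := hSne
    have hfj : Finset.univ.filter (fun i => det2 (b i) (b j₀) ≠ 0) = {p₀, q₀} := by
      ext i
      simp only [Finset.mem_filter, Finset.mem_univ, true_and, Finset.mem_insert,
        Finset.mem_singleton]
      constructor
      · intro h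
        rcases htri i with hi | hi | hi
        · exfalso; apply h; rw [htv j₀ hj₀, det2_smul_right, hmemS i hi, mul_zero]
        · left; exact hi
        · right; exact hi
      · rintro (rfl | rfl)
        · rw [htv j₀ hj₀, det2_smul_right]; exact mul_ne_zero (ht0 j₀ hj₀) hp
        · rw [htv j₀ hj₀, det2_smul_right]; exact mul_ne_zero (ht0 j₀ hj₀) hq
    have hdets : dets b j₀ =
        det2 (b p₀) (b j₀) ::ₘ det2 (b q₀) (b j₀) ::ₘ 0 := by
      rw [dets, hfj]
      rw [show ({p₀, q₀} : Finset (Fin 7)) = insert p₀ {q₀} from rfl,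
        Finset.insert_val_of_notMem (by simpa using hpq)]
      simp
    have hb := hbal j₀
    rw [hdets] at hb
    have hfp0 : det2 (b p₀) (b j₀) ≠ 0 := by
      rw [htv j₀ hj₀, det2_smul_right]; exact mul_ne_zero (ht0 j₀ hj₀) hp
    have hmem : -(det2 (b p₀) (b j₀)) ∈
        det2 (b p₀) (b j₀) ::ₘ det2 (b q₀) (b j₀) ::ₘ 0 :=
      hb.neg_mem (Multiset.mem_cons_self _ _)
    rcases Multiset.mem_cons.1 hmem with h | h
    · exfalso; apply hfp0; linarith
    · rcases Multiset.mem_cons.1 h with h | h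
      · have e1 : -(t j₀ * det2 (b p₀) v) = t j₀ * det2 (b q₀) v := by
          rw [← det2_smul_right, ← det2_smul_right, ← htv j₀ hj₀]; exact h
        have := mul_left_cancel₀ (ht0 j₀ hj₀) (by linarith :
          t j₀ * det2 (b q₀) v = t j₀ * (- det2 (b p₀) v))
        exact this
      · simp at h
  have hD : det2 (b p₀) v ≠ 0 := hp
  set β : ℝ := det2 (b p₀) (b q₀) / det2 (b p₀) v with hβdef
  have hpqdet : det2 (b p₀) (b q₀) ≠ 0 := hindep p₀ q₀ hp hq hpq
  have hβ : β ≠ 0 := div_ne_zero hpqdet hD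
  have hqdec : b q₀ = (-1 : ℝ) • (b p₀) + β • v := by
    have h := decomp (b p₀) v (b q₀) hD
    rw [hqpv] at h
    rw [h]
    congr 1
    rw [neg_div, div_self hD]
  -- balance at p₀
  set x : Fin 7 → ℝ := fun i => det2 (b i) (b p₀) with hxdef
  set c : ℝ := det2 v (b p₀) with hcdef
  have hc : c ≠ 0 := by
    rw [hcdef, det2_swap]; simpa using hD
  have hxS : ∀ i ∈ S, x i = t i * c := by
    intro i hi
    rw [hxdef]; simp only
    rw [htv i hi, det2_smul_left]
  have hxS0 : ∀ i ∈ S, x i ≠ 0 := by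
    intro i hi; rw [hxS i hi]; exact mul_ne_zero (ht0 i hi) hc
  have hxq : x q₀ = β * c := by
    rw [hxdef]; simp only
    rw [hqdec, det2_add_left, det2_smul_left, det2_smul_left, det2_self]
    ring
  have hxq0 : x q₀ ≠ 0 := by rw [hxq]; exact mul_ne_zero hβ hc
  have hfilter : Finset.univ.filter (fun i => det2 (b i) (b p₀) ≠ 0) = insert q₀ S := by
    ext i
    simp only [Finset.mem_filter, Finset.mem_univ, true_and, Finset.mem_insert]
    constructor
    · intro h
      rcases htri i with hi | rfl | rfl
      · right; exact hi
      · exfalso; exact h (det2_self _)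
      · left; rfl
    · rintro (rfl | hi)
      · exact hxq0
      · exact hxS0 i hi
  have hN : dets b p₀ = x q₀ ::ₘ S.val.map x := by
    rw [dets, hfilter, Finset.insert_val_of_notMem hqS, Multiset.map_cons]
  have hbalp := hbal p₀
  rw [hN] at hbalp
  -- extract index k with x k = - x q₀
  have hmd : -(x q₀) ∈ S.val.map x := by
    have h1 : -(x q₀) ∈ x q₀ ::ₘ S.val.map x := hbalp.neg_mem (Multiset.mem_cons_self _ _)
    rcases Multiset.mem_cons.1 h1 with h | h
    · exfalso; apply hxq0; linarith
    · exact h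
  -- peel off the remaining four, two, indices
  obtain ⟨k, hkSv, hk⟩ := Multiset.mem_map.1 hmd
  have hkS : k ∈ S := hkSv
  have htk : t k = -β := by
    rw [hxS k hkS, hxq] at hk
    exact mul_right_cancel₀ hc (by linarith : t k * c = (-β) * c)
  obtain ⟨R1, hR1⟩ : ∃ R1, S.val = k ::ₘ R1 := ⟨S.val.erase k, (Multiset.cons_erase hkSv).symm⟩
  have hnd1 : k ∉ R1 ∧ R1.Nodup := by
    have := S.nodup; rw [hR1, Multiset.nodup_cons] at this; exact this
  have hR1card : Multiset.card R1 = 4 := by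
    have h5 : Multiset.card S.val = 5 := hScard
    rw [hR1] at h5; simpa using h5
  have hN2 : ((x q₀ ::ₘ S.val.map x).erase (x q₀)).erase (-(x q₀)) = R1.map x := by
    rw [Multiset.erase_cons_head, hR1, Multiset.map_cons, hk, Multiset.erase_cons_head]
  have hsym2 : symmZero (R1.map x) := by rw [← hN2]; exact hbalp.erase2 _
  obtain ⟨a, haR1⟩ := Multiset.exists_mem_of_ne_zero
    (by intro h0; rw [h0] at hR1card; simp at hR1card : R1 ≠ 0)
  have haS : a ∈ S := by
    rw [Finset.mem_def, hR1]; exact Multiset.mem_cons_of_mem haR1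
  obtain ⟨R2, hR2⟩ : ∃ R2, R1 = a ::ₘ R2 := ⟨R1.erase a, (Multiset.cons_erase haR1).symm⟩
  have hnd2 : a ∉ R2 ∧ R2.Nodup := by
    have := hnd1.2; rw [hR2, Multiset.nodup_cons] at this; exact this
  have hma : -(x a) ∈ R2.map x := by
    have h1 : -(x a) ∈ R1.map x := hsym2.neg_mem (by rw [hR2, Multiset.map_cons]; exact Multiset.mem_cons_self _ _)
    rw [hR2, Multiset.map_cons] at h1
    rcases Multiset.mem_cons.1 h1 with h | h
    · exfalso; exact hxS0 a haS (by linarith)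
    · exact h
  obtain ⟨m, hmR2, hm⟩ := Multiset.mem_map.1 hma
  have hmR1 : m ∈ R1 := by rw [hR2]; exact Multiset.mem_cons_of_mem hmR2
  have hmS : m ∈ S := by rw [Finset.mem_def, hR1]; exact Multiset.mem_cons_of_mem hmR1
  have htm : t m = -(t a) := by
    rw [hxS m hmS, hxS a haS] at hm
    exact mul_right_cancel₀ hc (by linarith : t m * c = (-(t a)) * c)
  obtain ⟨R3, hR3⟩ : ∃ R3, R2 = m ::ₘ R3 := ⟨R2.erase m, (Multiset.cons_erase hmR2).symm⟩
  have hnd3 : m ∉ R3 ∧ R3.Nodup := by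
    have := hnd2.2; rw [hR3, Multiset.nodup_cons] at this; exact this
  have hR3card : Multiset.card R3 = 2 := by
    have := hR1card; rw [hR2, hR3] at this; simpa using this
  have hN3 : ((R1.map x).erase (x a)).erase (-(x a)) = R3.map x := by
    rw [hR2, Multiset.map_cons, Multiset.erase_cons_head, hR3, Multiset.map_cons, hm,
      Multiset.erase_cons_head]
  have hsym3 : symmZero (R3.map x) := by rw [← hN3]; exact hsym2.erase2 _
  obtain ⟨c₁, hc1R3⟩ := Multiset.exists_mem_of_ne_zero
    (by intro h0; rw [h0] at hR3card; simp at hR3card : R3 ≠ 0)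
  have hc1R2 : c₁ ∈ R2 := by rw [hR3]; exact Multiset.mem_cons_of_mem hc1R3
  have hc1R1 : c₁ ∈ R1 := by rw [hR2]; exact Multiset.mem_cons_of_mem hc1R2
  have hc1S : c₁ ∈ S := by rw [Finset.mem_def, hR1]; exact Multiset.mem_cons_of_mem hc1R1
  obtain ⟨R4, hR4⟩ : ∃ R4, R3 = c₁ ::ₘ R4 := ⟨R3.erase c₁, (Multiset.cons_erase hc1R3).symm⟩
  have hnd4 : c₁ ∉ R4 ∧ R4.Nodup := by
    have := hnd3.2; rw [hR4, Multiset.nodup_cons] at this; exact this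
  have hme : -(x c₁) ∈ R4.map x := by
    have h1 : -(x c₁) ∈ R3.map x := hsym3.neg_mem (by rw [hR4, Multiset.map_cons]; exact Multiset.mem_cons_self _ _)
    rw [hR4, Multiset.map_cons] at h1
    rcases Multiset.mem_cons.1 h1 with h | h
    · exfalso; exact hxS0 c₁ hc1S (by linarith)
    · exact h
  obtain ⟨e₁, he1R4, he⟩ := Multiset.mem_map.1 hme
  have he1R3 : e₁ ∈ R3 := by rw [hR4]; exact Multiset.mem_cons_of_mem he1R4
  have he1R2 : e₁ ∈ R2 := by rw [hR3]; exact Multiset.mem_cons_of_mem he1R3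
  have he1R1 : e₁ ∈ R1 := by rw [hR2]; exact Multiset.mem_cons_of_mem he1R2
  have he1S : e₁ ∈ S := by rw [Finset.mem_def, hR1]; exact Multiset.mem_cons_of_mem he1R1
  have hte : t e₁ = -(t c₁) := by
    rw [hxS e₁ he1S, hxS c₁ hc1S] at he
    exact mul_right_cancel₀ hc (by linarith : t e₁ * c = (-(t c₁)) * c)
  -- distinctness
  have haR2 : m ≠ a := fun h => hnd2.1 (h ▸ hmR2)
  have hka : k ≠ a := fun h => hnd1.1 (h ▸ haR1)
  have hkm : k ≠ m := fun h => hnd1.1 (h ▸ hmR1)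
  have hkc : k ≠ c₁ := fun h => hnd1.1 (h ▸ hc1R1)
  have hke : k ≠ e₁ := fun h => hnd1.1 (h ▸ he1R1)
  have hac : a ≠ c₁ := fun h => hnd2.1 (h ▸ hc1R2)
  have hae : a ≠ e₁ := fun h => hnd2.1 (h ▸ he1R2)
  have hmc : m ≠ c₁ := fun h => hnd3.1 (h ▸ hc1R3)
  have hme' : m ≠ e₁ := fun h => hnd3.1 (h ▸ he1R3)
  have hce : c₁ ≠ e₁ := fun h => hnd4.1 (h ▸ he1R4)
  have hpk : p₀ ≠ k := fun h => hpS (h ▸ hkS)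
  have hpa : p₀ ≠ a := fun h => hpS (h ▸ haS)
  have hpm : p₀ ≠ m := fun h => hpS (h ▸ hmS)
  have hpc : p₀ ≠ c₁ := fun h => hpS (h ▸ hc1S)
  have hpe : p₀ ≠ e₁ := fun h => hpS (h ▸ he1S)
  have hqk : q₀ ≠ k := fun h => hqS (h ▸ hkS)
  have hqa : q₀ ≠ a := fun h => hqS (h ▸ haS)
  have hqm : q₀ ≠ m := fun h => hqS (h ▸ hmS)
  have hqc : q₀ ≠ c₁ := fun h => hqS (h ▸ hc1S)
  have hqe : q₀ ≠ e₁ := fun h => hqS (h ▸ he1S)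
  -- the linear equivalence
  have hDp : (b p₀).1 * v.2 - (b p₀).2 * v.1 ≠ 0 := by simpa [det2] using hD
  have hDp' : v.2 * (b p₀).1 - v.1 * (b p₀).2 ≠ 0 := by intro e; apply hDp; linarith
  have hDp'' : v.2 * (b p₀).1 - (b p₀).2 * v.1 ≠ 0 := by intro e; apply hDp; linarith
  have hDp''' : -(v.1 * (b p₀).2) + (b p₀).1 * v.2 ≠ 0 := by intro e; apply hDp; linarith
  obtain ⟨f, hf⟩ := mkL ((b p₀).2/(β*(det2 (b p₀) v))) (-((b p₀).1)/(β*(det2 (b p₀) v)))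
    (v.2/(det2 (b p₀) v)) (-(v.1)/(det2 (b p₀) v))
  obtain ⟨f', hf'⟩ := mkL (-(β*v.1)) ((b p₀).1) (-(β*v.2)) ((b p₀).2)
  have hfi : ∀ z, f (f' z) = z := by
    intro z
    rw [hf', hf]
    apply Prod.ext <;> (simp only [det2]; field_simp [hβ, hDp]; ring)
  have hfi' : ∀ z, f' (f z) = z := by
    intro z
    rw [hf, hf']
    apply Prod.ext <;> (field_simp [hβ, hD]; simp only [det2]; ring)
  have hgv : f v = (-(1/β), 0) := by
    rw [hf]; apply Prod.ext <;> (simp only [det2]; field_simp [hβ, hDp]; ring)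
  have hgp : f (b p₀) = (0, 1) := by
    rw [hf]; apply Prod.ext <;> (simp only [det2]; field_simp [hβ, hDp]; ring)
  have hgq : f (b q₀) = (-1, -1) := by
    rw [hqdec, map_add, map_smul, map_smul, hgv, hgp]
    apply Prod.ext <;> simp <;> field_simp [hβ]
  have hgS : ∀ i ∈ S, f (b i) = (-(t i)/β, 0) := by
    intro i hi
    rw [htv i hi, map_smul, hgv]
    apply Prod.ext <;> simp <;> field_simp [hβ] <;> ring
  have hgk : f (b k) = (1, 0) := by
    rw [hgS k hkS, htk]
    rw [neg_neg, div_self hβ]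
  -- the permutation
  set τ : Fin 7 → Fin 7 := ![k, p₀, q₀, a, m, c₁, e₁] with hτdef
  have hinj : Function.Injective τ := by
    rw [← List.nodup_ofFn]
    simp [hτdef, hpq, hka, hkm, hkc, hke, haR2.symm, hac, hae, hmc, hme', hce,
      hpk.symm, hpa.symm, hpm.symm, hpc.symm, hpe.symm,
      hqk.symm, hqa.symm, hqm.symm, hqc.symm, hqe.symm]
    tauto
  have hbij : Function.Bijective τ := Finite.injective_iff_bijective.1 hinj
  set E := Equiv.ofBijective τ hbij with hEdef
  refine ⟨LinearEquiv.ofLinear f f' (LinearMap.ext hfi) (LinearMap.ext hfi'), E.symm,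
    fun _ => 1, -(t a)/β, -(t c₁)/β,
    div_ne_zero (neg_ne_zero.2 (ht0 a haS)) hβ,
    div_ne_zero (neg_ne_zero.2 (ht0 c₁ hc1S)) hβ,
    fun _ => one_ne_zero, ?_⟩
  intro j
  have hτj : τ (E.symm j) = j := E.apply_symm_apply j
  simp only [LinearEquiv.ofLinear_apply, one_smul]
  generalize hr : E.symm j = r
  rw [hr] at hτj
  subst hτj
  fin_cases r <;>
    simp only [hτdef, Matrix.cons_val_zero, Matrix.cons_val_one, Matrix.head_cons,
      Matrix.cons_val_succ, Fin.mk_zero, Fin.mk_one]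
  · exact hgk
  · exact hgp
  · exact hgq
  · exact hgS a haS
  · show f (b m) = _
    rw [hgS m hmS, htm]
    simp only [neg_div, neg_neg]
    rfl
  · exact hgS c₁ hc1S
  · show f (b e₁) = _
    rw [hgS e₁ he1S, hte]
    simp only [neg_div, neg_neg]
    rfl
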